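/- Let G be a finite group and H, K ≤ G subgroups, and let W ⊆ G be a set of representatives for the double cosets K\G/H. Then on abelianizations, the composition of the map H^{ab} → G^{ab} induced by the inclusion H ≤ G with the transfer Ver^G_K : G^{ab} → K^{ab} equals the sum over w ∈ W of the compositions H^{ab} → (K ∩ wHw⁻¹)^{ab} → K^{ab}, where the first map is the transfer Ver^H_{w⁻¹Kw ∩ H} followed by the isomorphism induced by conjugation x ↦ wxw⁻¹ from (w⁻¹Kw ∩ H)^{ab} to (K ∩ wHw⁻¹)^{ab}, and the second map is induced by the inclusion K ∩ wHw⁻¹ ≤ K. (Mackey formula for the transfer on abelianizations.) -/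

import Mathlib

open Subgroup Subgroup.leftTransversals MulAction

/-- `w⁻¹Kw ∩ H`, as a subgroup of `H`. -/
def dcA {G : Type*} [Group G] (H K : Subgroup G) (w : G) : Subgroup H :=
  (Subgroup.map (MulAut.conj w⁻¹).toMonoidHom K).subgroupOf H

/-- `K ∩ wHw⁻¹`, as a subgroup of `K`. -/
def dcB {G : Type*} [Group G] (H K : Subgroup G) (w : G) : Subgroup K :=
  (Subgroup.map (MulAut.conj w).toMonoidHom H).subgroupOf K

lemma dcA_conj_mem {G : Type*} [Group G] {H K : Subgroup G} {w : G}
    (a : dcA H K w) : w * ((a : H) : G) * w⁻¹ ∈ K := by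
  have h := a.2
  simp only [dcA, Subgroup.mem_subgroupOf] at h
  obtain ⟨k, hk, hkk⟩ := h
  have h2 : w * ((a : H) : G) * w⁻¹ = k := by
    rw [← hkk]
    simp only [MulEquiv.coe_toMonoidHom, MulAut.conj_apply]
    group
  rw [h2]; exact hk

lemma dcA_conj_mem_dcB {G : Type*} [Group G] {H K : Subgroup G} {w : G}
    (a : dcA H K w) :
    (⟨w * ((a : H) : G) * w⁻¹, dcA_conj_mem a⟩ : K) ∈ dcB H K w := by
  simp only [dcB, Subgroup.mem_subgroupOf]
  refine ⟨((a : H) : G), (a : H).2, ?_⟩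
  simp [MulAut.conj_apply]

/-- Conjugation by `w`, as a homomorphism `w⁻¹Kw ∩ H → K ∩ wHw⁻¹`. -/
def dcConj {G : Type*} [Group G] (H K : Subgroup G) (w : G) :
    dcA H K w →* dcB H K w where
  toFun a := ⟨⟨w * ((a : H) : G) * w⁻¹, dcA_conj_mem a⟩, dcA_conj_mem_dcB a⟩
  map_one' := by
    ext
    simp
  map_mul' a b := by
    ext
    simp only [Subgroup.coe_mul, MulMemClass.mk_mul_mk]
    group

/- ### auxiliary lemmas -/

lemma mem_aux {G' : Type*} [Group G'] {L : Subgroup G'} (f : G' ⧸ L → G')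
    (hf : ∀ q, (↑(f q) : G' ⧸ L) = q) (g : G') (q : G' ⧸ L) :
    (f q)⁻¹ * (g * f (g⁻¹ • q)) ∈ L := by
  rw [← QuotientGroup.eq]
  rw [hf q]
  have key : ∀ a : G', (QuotientGroup.mk (g * a) : G' ⧸ L) = g • (QuotientGroup.mk a) :=
    fun a => MulAction.Quotient.smul_mk _ g a
  rw [key, hf, smul_inv_smul]

lemma transfer_eq_prod {G' : Type*} [Group G'] {L : Subgroup G'} [L.FiniteIndex]
    {A : Type*} [CommGroup A] (ϕ : L →* A) (f : G' ⧸ L → G')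
    (hf : ∀ q, (↑(f q) : G' ⧸ L) = q) (g : G') :
    MonoidHom.transfer ϕ g =
      (@Finset.univ (G' ⧸ L) L.fintypeQuotientOfFiniteIndex).prod
        (fun q => ϕ ⟨(f q)⁻¹ * (g * f (g⁻¹ • q)), mem_aux f hf g q⟩) := by
  letI := L.fintypeQuotientOfFiniteIndex
  let T : L.LeftTransversal := ⟨Set.range f, isComplement_range_left hf⟩
  refine (MonoidHom.transfer_def ϕ T g).trans (Finset.prod_congr rfl fun q _ => ?_)
  refine congr_arg ϕ (Subtype.ext ?_)
  show (T.2.leftQuotientEquiv q : G')⁻¹ * ((g • T).2.leftQuotientEquiv q : G') = _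
  rw [Subgroup.smul_apply_eq_smul_apply_inv_smul]
  rw [IsComplement.leftQuotientEquiv_apply hf, IsComplement.leftQuotientEquiv_apply hf]
  simp [mul_assoc]

lemma dcA_mem_of_conj {G : Type*} [Group G] {H K : Subgroup G} {w : G}
    {a : H} (h : w * (a : G) * w⁻¹ ∈ K) : a ∈ dcA H K w := by
  simp only [dcA, Subgroup.mem_subgroupOf, Subgroup.mem_map]
  exact ⟨w * (a : G) * w⁻¹, h, by simp [MulAut.conj_apply]; group⟩

/-- The map `H ⧸ (w⁻¹Kw ∩ H) → G ⧸ K`, `h ↦ h w⁻¹ K`. -/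
def dcF {G : Type*} [Group G] (H K : Subgroup G) (w : G) :
    H ⧸ dcA H K w → G ⧸ K :=
  Quotient.map' (fun h => (h : G) * w⁻¹) (by
    intro a b hab
    rw [QuotientGroup.leftRel_apply] at hab ⊢
    have h2 := dcA_conj_mem (⟨a⁻¹ * b, hab⟩ : dcA H K w)
    have h3 : ((a : G) * w⁻¹)⁻¹ * ((b : G) * w⁻¹) = w * ((a⁻¹ * b : H) : G) * w⁻¹ := by
      push_cast; group
    rw [h3]; exact h2)

lemma dcF_mk {G : Type*} [Group G] (H K : Subgroup G) (w : G) (h : H) :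
    dcF H K w (h : H ⧸ dcA H K w) = ((h : G) * w⁻¹ : G) := rfl

lemma dcF_out {G : Type*} [Group G] (H K : Subgroup G) (w : G) (r : H ⧸ dcA H K w) :
    dcF H K w r = (((Quotient.out r : H) : G) * w⁻¹ : G) := by
  conv_lhs => rw [← Quotient.out_eq' r]
  rfl

lemma dcF_smul {G : Type*} [Group G] (H K : Subgroup G) (w : G) (y : H) (r : H ⧸ dcA H K w) :
    dcF H K w (y • r) = (y : G) • dcF H K w r := by
  induction r using QuotientGroup.induction_on with
  | H h =>
    have h1 : y • (h : H ⧸ dcA H K w) = ((y * h : H) : H ⧸ dcA H K w) :=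
      MulAction.Quotient.smul_mk _ y h
    rw [h1, dcF_mk, dcF_mk]
    have h2 : ((y : G) • ((((h : H) : G) * w⁻¹ : G) : G ⧸ K)) = (((y : G) * (((h : H) : G) * w⁻¹) : G) : G ⧸ K) :=
      (MulAction.Quotient.smul_mk _ _ _).symm
    rw [h2]
    push_cast
    rw [mul_assoc]

theorem mackey_transfer_abelianization {G : Type*} [Group G] [Finite G]
    (H K : Subgroup G) (W : Finset G)
    (hW : ∀ g : G, ∃! w, w ∈ W ∧ ∃ k ∈ K, ∃ h ∈ H, g = k * w * h) :
    ∀ x : H,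
      MonoidHom.transfer (Abelianization.of : K →* Abelianization K) (x : G)
        = ∏ w ∈ W,
            Abelianization.map (dcB H K w).subtype
              (Abelianization.map (dcConj H K w)
                (MonoidHom.transfer
                  (Abelianization.of : dcA H K w →* Abelianization (dcA H K w))
                  x)) := by
  intro x
  classical
  letI fq : Fintype (G ⧸ K) := K.fintypeQuotientOfFiniteIndex
  letI fr : ∀ w : G, Fintype (H ⧸ dcA H K w) := fun w => (dcA H K w).fintypeQuotientOfFiniteIndex
  -- the sigma type indexing cosets of K in G
  set σ := (w : {w // w ∈ W}) × (H ⧸ dcA H K (w : G)) with hσ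
  set F : σ → G ⧸ K := fun p => dcF H K (p.1 : G) p.2 with hF
  have hbij : Function.Bijective F := by
    constructor
    · rintro ⟨⟨w, hw⟩, r⟩ ⟨⟨w', hw'⟩, r'⟩ hpq
      induction r using Quotient.inductionOn' with
      | h h₁ =>
      induction r' using Quotient.inductionOn' with
      | h h₂ =>
      simp only [hF, dcF_mk] at hpq
      rw [QuotientGroup.eq] at hpq
      -- hpq : ((h₁:G) * w⁻¹)⁻¹ * ((h₂:G) * w'⁻¹) ∈ K
      set k : G := ((h₁ : G) * w⁻¹)⁻¹ * ((h₂ : G) * w'⁻¹) with hk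
      have hww' : w = w' := by
        have h5 : (w' : G) = k⁻¹ * w * ((h₁ : H)⁻¹ * h₂ : H) := by
          rw [hk]; push_cast; group
        have h6 := hW w'
        have e1 : w' ∈ W ∧ ∃ k' ∈ K, ∃ h ∈ H, (w' : G) = k' * w' * h :=
          ⟨hw', 1, K.one_mem, 1, H.one_mem, by group⟩
        have e2 : w ∈ W ∧ ∃ k' ∈ K, ∃ h ∈ H, (w' : G) = k' * w * h :=
          ⟨hw, k⁻¹, K.inv_mem hpq, ((h₁ : H)⁻¹ * h₂ : H), ((h₁ : H)⁻¹ * h₂ : H).2, h5⟩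
        exact (h6.unique e2 e1)
      subst hww'
      have h7 : (h₁ : H)⁻¹ * h₂ ∈ dcA H K w := by
        apply dcA_mem_of_conj
        have : w * (((h₁ : H)⁻¹ * h₂ : H) : G) * w⁻¹ = k := by rw [hk]; push_cast; group
        rw [this]; exact hpq
      have h8 : (Quotient.mk'' h₁ : H ⧸ dcA H K w) = Quotient.mk'' h₂ :=
        QuotientGroup.eq.mpr h7
      exact Sigma.ext rfl (heq_of_eq h8)
    · intro q
      induction q using Quotient.inductionOn' with
      | h g =>
      obtain ⟨w, ⟨hw, k, hk, h, hh, hg⟩, -⟩ := hW g⁻¹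
      refine ⟨⟨⟨w, hw⟩, ((⟨h, hh⟩ : H)⁻¹ : H)⟩, ?_⟩
      show dcF H K w (((⟨h, hh⟩ : H)⁻¹ : H) : H ⧸ dcA H K w) = Quotient.mk'' g
      rw [dcF_mk]
      apply QuotientGroup.eq.mpr
      have hg' : g = h⁻¹ * w⁻¹ * k⁻¹ := by
        have := congrArg (·⁻¹) hg; simp at this
        rw [this]; group
      have hg' : g = h⁻¹ * w⁻¹ * k⁻¹ := by
        rw [← inv_inv g, hg]; group
      have hv : ((((⟨h, hh⟩ : H)⁻¹ : H) : G) * w⁻¹)⁻¹ * g = k⁻¹ := by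
        push_cast
        rw [hg']; group
      rw [hv]
      exact K.inv_mem hk
  let e : σ ≃ G ⧸ K := Equiv.ofBijective F hbij
  let f : G ⧸ K → G := fun q => (((e.symm q).2.out : H) : G) * ((e.symm q).1 : G)⁻¹
  have hf : ∀ q, (↑(f q) : G ⧸ K) = q := by
    intro q
    have h1 : (↑(f q) : G ⧸ K) = F (e.symm q) := (dcF_out H K _ _).symm
    rw [h1]
    exact e.apply_symm_apply q
  rw [transfer_eq_prod Abelianization.of f hf (x : G)]
  have hR : ∀ w : G,
      Abelianization.map (dcB H K w).subtype (Abelianization.map (dcConj H K w)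
        (MonoidHom.transfer (Abelianization.of : dcA H K w →* Abelianization (dcA H K w)) x))
      = (@Finset.univ (H ⧸ dcA H K w) (fr w)).prod (fun r =>
          Abelianization.of ((dcB H K w).subtype (dcConj H K w
            ⟨(Quotient.out r : H)⁻¹ * (x * (Quotient.out (x⁻¹ • r) : H)),
              mem_aux (fun r => (Quotient.out r : H)) (fun r => Quotient.out_eq' r) x r⟩))) := by
    intro w
    rw [transfer_eq_prod (Abelianization.of) (fun r => (Quotient.out r : H))
      (fun r => Quotient.out_eq' r) x]
    rw [map_prod, map_prod]
    exact Finset.prod_congr rfl fun r _ => by rw [Abelianization.map_of, Abelianization.map_of]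
  refine Eq.trans ?_ (Finset.prod_congr rfl (fun w _ => (hR w))).symm
  rw [← Finset.prod_coe_sort W]
  rw [Finset.prod_sigma']
  rw [Finset.univ_sigma_univ]
  refine (Fintype.prod_equiv e _ _ (fun p => ?_)).symm
  obtain ⟨⟨w, hw⟩, r⟩ := p
  have h1 : f (e ⟨⟨w, hw⟩, r⟩) = ((Quotient.out r : H) : G) * w⁻¹ := by
    show (((e.symm (e ⟨⟨w, hw⟩, r⟩)).2.out : H) : G) * ((e.symm (e ⟨⟨w, hw⟩, r⟩)).1 : G)⁻¹ = _
    rw [e.symm_apply_apply]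
  have h2 : (x : G)⁻¹ • e ⟨⟨w, hw⟩, r⟩ = e ⟨⟨w, hw⟩, x⁻¹ • r⟩ := by
    show (x : G)⁻¹ • dcF H K w r = dcF H K w (x⁻¹ • r)
    rw [dcF_smul]
    norm_cast
  have h3 : f ((x : G)⁻¹ • e ⟨⟨w, hw⟩, r⟩) = ((Quotient.out (x⁻¹ • r) : H) : G) * w⁻¹ := by
    rw [h2]
    show (((e.symm (e _)).2.out : H) : G) * ((e.symm (e _)).1 : G)⁻¹ = _
    rw [e.symm_apply_apply]
  refine congrArg Abelianization.of (Subtype.ext ?_)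
  show w * ((((Quotient.out r : H)⁻¹ * (x * (Quotient.out (x⁻¹ • r) : H)) : H)) : G) * w⁻¹
      = (f (e ⟨⟨w, hw⟩, r⟩))⁻¹ * ((x : G) * f ((x : G)⁻¹ • e ⟨⟨w, hw⟩, r⟩))
  rw [h1, h3]
  push_cast
  group
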